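/- If every vertex of a connected multigraph G is incident with a cycle of length 2 or 3 (i.e., with a pair of parallel edges or a triangle), then G has the strong parity property. -/

import Mathlib

open SimpleGraph

/-- The degree of `v` in `H`, defined as the cardinality of its neighbor set. -/
noncomputable def edeg {V : Type*} (H : SimpleGraph V) (v : V) : ℕ := (H.neighborSet v).ncard

/-- A factor of `G`: a spanning subgraph with all degrees at least 1. -/
def IsFactor {V : Type*} (G H : SimpleGraph V) : Prop :=
  H ≤ G ∧ ∀ v, 1 ≤ edeg H v

/-- An `X`-parity-factor of `G`: a factor whose odd-degree vertices are exactly `X`. -/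
def IsParityFactor {V : Type*} (G H : SimpleGraph V) (X : Set V) : Prop :=
  IsFactor G H ∧ ∀ v, (Odd (edeg H v) ↔ v ∈ X)

/-- `G` has the strong parity property if every even-sized vertex subset
admits an `X`-parity-factor. -/
def StrongParity {V : Type*} (G : SimpleGraph V) : Prop :=
  ∀ X : Set V, Even X.ncard → ∃ H, IsParityFactor G H X

section Aux

open scoped symmDiff

variable {V : Type*} [Fintype V]

lemma neighborSet_symmDiff (A B : SimpleGraph V) (v : V) :
    (A ∆ B).neighborSet v =
      (A.neighborSet v \ B.neighborSet v) ∪ (B.neighborSet v \ A.neighborSet v) := by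
  ext u
  simp [symmDiff_def, Set.mem_diff, mem_neighborSet]

lemma edeg_symmDiff_parity (A B : SimpleGraph V) (v : V) :
    Even (edeg (A ∆ B) v) ↔ (Even (edeg A v) ↔ Even (edeg B v)) := by
  classical
  have hns := neighborSet_symmDiff A B v
  set sA := A.neighborSet v
  set sB := B.neighborSet v
  have hdis : Disjoint (sA \ sB) (sB \ sA) := disjoint_sdiff_sdiff
  have h1 : (sA ∆ sB).ncard = (sA \ sB).ncard + (sB \ sA).ncard := by
    rw [Set.symmDiff_def]
    exact Set.ncard_union_eq hdis (Set.toFinite _) (Set.toFinite _)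
  have h2 : (sA ∩ sB).ncard + (sA \ sB).ncard = sA.ncard :=
    Set.ncard_inter_add_ncard_diff_eq_ncard sA sB (Set.toFinite _)
  have h3 : (sB ∩ sA).ncard + (sB \ sA).ncard = sB.ncard :=
    Set.ncard_inter_add_ncard_diff_eq_ncard sB sA (Set.toFinite _)
  have hi : (sB ∩ sA).ncard = (sA ∩ sB).ncard := by rw [Set.inter_comm]
  have hd : edeg (A ∆ B) v = (sA \ sB).ncard + (sB \ sA).ncard := by
    unfold edeg
    rw [hns, ← Set.symmDiff_def, h1]
  have hA : edeg A v = sA.ncard := rfl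
  have hB : edeg B v = sB.ncard := rfl
  rw [hd, hA, hB, ← h2, ← h3, hi]
  simp only [Nat.even_iff] at *
  omega

lemma edeg_bot (v : V) : edeg (⊥ : SimpleGraph V) v = 0 := by
  simp [edeg, neighborSet]

/-- Degree of a vertex in (the spanning coercion of) a trail's subgraph equals the number
of edges of the trail containing it. -/
lemma edeg_trail [DecidableEq V] {G : SimpleGraph V} {x y : V} (p : G.Walk x y)
    (hp : p.IsTrail) (a : V) :
    edeg p.toSubgraph.spanningCoe a = p.edges.countP (fun e => a ∈ e) := by
  classical
  have hadj : ∀ b, p.toSubgraph.spanningCoe.Adj a b ↔ s(a, b) ∈ p.edges := by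
    intro b
    rw [Subgraph.spanningCoe_adj, ← Subgraph.mem_edgeSet, Walk.mem_edges_toSubgraph]
  have hset : p.toSubgraph.spanningCoe.neighborSet a = {b | s(a, b) ∈ p.edges} := by
    ext b; exact hadj b
  have himg : (fun b => s(a, b)) '' {b | s(a, b) ∈ p.edges}
      = {e | e ∈ p.edges ∧ a ∈ e} := by
    ext e
    constructor
    · rintro ⟨b, hb, rfl⟩
      exact ⟨hb, Sym2.mem_mk_left a b⟩
    · rintro ⟨he, ha⟩
      obtain ⟨b, rfl⟩ := Sym2.mem_iff_exists.mp ha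
      exact ⟨b, he, rfl⟩
  have hinj : Set.InjOn (fun b => s(a, b)) {b | s(a, b) ∈ p.edges} := by
    intro b1 _ b2 _ h
    exact Sym2.congr_right.mp h
  have h1 : ({b | s(a, b) ∈ p.edges} : Set V).ncard = ({e | e ∈ p.edges ∧ a ∈ e} : Set (Sym2 V)).ncard := by
    rw [← himg, Set.ncard_image_of_injOn hinj]
  have hfilter : {e | e ∈ p.edges ∧ a ∈ e}
      = ((p.edges.filter (fun e => a ∈ e)).toFinset : Set (Sym2 V)) := by
    ext e
    simp [List.mem_filter, List.mem_toFinset]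
  have hnodup : (p.edges.filter (fun e => a ∈ e)).Nodup := hp.edges_nodup.filter _
  have h2 : ({e | e ∈ p.edges ∧ a ∈ e} : Set (Sym2 V)).ncard
      = p.edges.countP (fun e => a ∈ e) := by
    rw [hfilter, Set.ncard_coe_finset, List.toFinset_card_of_nodup hnodup,
      List.countP_eq_length_filter]
  unfold edeg
  rw [hset, h1, h2]

set_option maxHeartbeats 1600000 in
/-- Existence of a subgraph with prescribed odd-degree set, in a connected graph. -/
lemma exists_parity_sub {G : SimpleGraph V} (hG : G.Connected) :
    ∀ n (X : Set V), Even n → X.ncard = n →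
      ∃ J, J ≤ G ∧ ∀ v, (Odd (edeg J v) ↔ v ∈ X) := by
  classical
  intro n
  induction n using Nat.strong_induction_on with
  | _ n ih =>
    intro X hEven hcard
    rcases Nat.eq_zero_or_pos n with hn0 | hnpos
    · subst hn0
      have hXe : X = ∅ := (Set.ncard_eq_zero (Set.toFinite _)).mp hcard
      refine ⟨⊥, bot_le, ?_⟩
      intro v
      simp [edeg_bot, hXe]
    · -- n ≥ 2
      have hn2 : 2 ≤ n := by
        rcases hEven with ⟨k, hk⟩; omega
      have hXne : X.Nonempty := by
        rw [← Set.ncard_pos (Set.toFinite _)] at *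
        omega
      obtain ⟨x, hx⟩ := hXne
      have hXx : (X \ {x}).Nonempty := by
        have : (X \ {x}).ncard = n - 1 := by
          rw [Set.ncard_diff_singleton_of_mem hx, hcard]
        rw [← Set.ncard_pos (Set.toFinite _)]
        omega
      obtain ⟨y, hy⟩ := hXx
      have hyX : y ∈ X := hy.1
      have hxy : x ≠ y := fun h => hy.2 h.symm
      -- the smaller set
      set X' : Set V := X \ {x, y} with hX'def
      have hsub : ({x, y} : Set V) ⊆ X := by
        intro z hz; rcases hz with rfl | rfl <;> assumption
      have hcard' : X'.ncard = n - 2 := by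
        rw [hX'def, Set.ncard_diff hsub (Set.toFinite _), Set.ncard_pair hxy, hcard]
      have hEven' : Even (n - 2) := by
        rcases hEven with ⟨k, hk⟩; exact ⟨k - 1, by omega⟩
      obtain ⟨J', hJ'le, hJ'par⟩ := ih (n - 2) (by omega) X' hEven' hcard'
      -- a path from x to y
      obtain ⟨w⟩ := hG.preconnected x y
      set p := w.bypass with hpdef
      have hp : p.IsPath := w.bypass_isPath
      set P := p.toSubgraph.spanningCoe with hPdef
      have hPle : P ≤ G := by
        intro a b hab
        exact p.toSubgraph.adj_sub hab
      have hPpar : ∀ a, Even (edeg P a) ↔ (a ≠ x ∧ a ≠ y) := by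
        intro a
        rw [hPdef, edeg_trail p hp.isTrail a]
        rw [hp.isTrail.even_countP_edges_iff a]
        constructor
        · intro h; exact h hxy
        · intro h _; exact h
      refine ⟨J' ∆ P, symmDiff_le_sup.trans (sup_le hJ'le hPle), ?_⟩
      intro v
      have h1 := edeg_symmDiff_parity J' P v
      have h2 : Even (edeg J' v) ↔ ¬ (v ∈ X') := by
        rw [← hJ'par v, Nat.not_odd_iff_even]
      have h3 := hPpar v
      have hX'mem : v ∈ X' ↔ (v ∈ X ∧ v ≠ x ∧ v ≠ y) := by
        simp only [hX'def, Set.mem_diff, Set.mem_insert_iff, Set.mem_singleton_iff]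
        tauto
      have hvx : v = x → v ∈ X := fun h => h ▸ hx
      have hvy : v = y → v ∈ X := fun h => h ▸ hyX
      rw [← Nat.not_even_iff_odd, h1, h2, h3, hX'mem]
      tauto

set_option maxHeartbeats 1600000 in
/-- Fixing isolated vertices without changing parities, when every vertex lies on a triangle. -/
lemma fix_isolated {G : SimpleGraph V}
    (htri : ∀ v : V, ∃ u w : V, G.Adj v u ∧ G.Adj v w ∧ G.Adj u w) :
    ∀ n (J : SimpleGraph V), J ≤ G → {v | edeg J v = 0}.ncard = n →
      ∃ H, H ≤ G ∧ (∀ v, 1 ≤ edeg H v) ∧ (∀ v, Even (edeg H v) ↔ Even (edeg J v)) := by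
  classical
  intro n
  induction n using Nat.strong_induction_on with
  | _ n ih =>
    intro J hJle hcard
    rcases Nat.eq_zero_or_pos n with hn0 | hnpos
    · subst hn0
      have hempty : {v | edeg J v = 0} = ∅ := (Set.ncard_eq_zero (Set.toFinite _)).mp hcard
      refine ⟨J, hJle, ?_, fun v => Iff.rfl⟩
      intro v
      by_contra h
      have : edeg J v = 0 := by omega
      have : v ∈ ({v | edeg J v = 0} : Set V) := this
      rw [hempty] at this
      exact this
    · -- pick an isolated vertex
      have hne : ({v | edeg J v = 0} : Set V).Nonempty := by
        rw [← Set.ncard_pos (Set.toFinite _)]; omega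
      obtain ⟨v, hv⟩ := hne
      have hvdeg : edeg J v = 0 := hv
      have hvset : J.neighborSet v = ∅ := by
        have := hvdeg
        unfold edeg at this
        exact (Set.ncard_eq_zero (Set.toFinite _)).mp this
      obtain ⟨u, w, hvu, hvw, huw⟩ := htri v
      have hvu' : v ≠ u := hvu.ne
      have hvw' : v ≠ w := hvw.ne
      have huw' : u ≠ w := huw.ne
      set T : SimpleGraph V := fromEdgeSet {s(v, u), s(v, w), s(u, w)} with hTdef
      have hTadj : ∀ a b, T.Adj a b ↔
          ((s(a, b) = s(v, u) ∨ s(a, b) = s(v, w) ∨ s(a, b) = s(u, w)) ∧ a ≠ b) := by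
        intro a b
        rw [hTdef, fromEdgeSet_adj]
        simp [Set.mem_insert_iff]
      have hTle : T ≤ G := by
        intro a b hab
        rw [hTadj] at hab
        obtain ⟨h | h | h, -⟩ := hab <;>
        · rw [Sym2.eq_iff] at h
          rcases h with ⟨rfl, rfl⟩ | ⟨rfl, rfl⟩
          · assumption
          · exact (by assumption : G.Adj _ _).symm
      -- neighbor sets of T
      have hTv : T.neighborSet v = {u, w} := by
        ext b
        rw [mem_neighborSet, hTadj]
        constructor
        · rintro ⟨h | h | h, hne⟩ <;> rw [Sym2.eq_iff] at h <;>
            rcases h with ⟨h1, h2⟩ | ⟨h1, h2⟩ <;> simp_all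
        · rintro (rfl | rfl)
          · exact ⟨Or.inl rfl, hvu'⟩
          · exact ⟨Or.inr (Or.inl rfl), hvw'⟩
      have hTu : T.neighborSet u = {v, w} := by
        ext b
        rw [mem_neighborSet, hTadj]
        constructor
        · rintro ⟨h | h | h, hne⟩ <;> rw [Sym2.eq_iff] at h <;>
            rcases h with ⟨h1, h2⟩ | ⟨h1, h2⟩ <;> simp_all
        · rintro (rfl | rfl)
          · exact ⟨Or.inl (by rw [Sym2.eq_swap]), hvu'.symm⟩
          · exact ⟨Or.inr (Or.inr rfl), huw'⟩
      have hTw : T.neighborSet w = {v, u} := by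
        ext b
        rw [mem_neighborSet, hTadj]
        constructor
        · rintro ⟨h | h | h, hne⟩ <;> rw [Sym2.eq_iff] at h <;>
            rcases h with ⟨h1, h2⟩ | ⟨h1, h2⟩ <;> simp_all
        · rintro (rfl | rfl)
          · exact ⟨Or.inr (Or.inl (by rw [Sym2.eq_swap])), hvw'.symm⟩
          · exact ⟨Or.inr (Or.inr (by rw [Sym2.eq_swap])), huw'.symm⟩
      have hTother : ∀ z, z ≠ v → z ≠ u → z ≠ w → T.neighborSet z = ∅ := by
        intro z hzv hzu hzw
        ext b
        rw [mem_neighborSet, hTadj]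
        simp only [Set.mem_empty_iff_false, iff_false]
        rintro ⟨h | h | h, hne⟩ <;> rw [Sym2.eq_iff] at h <;>
          rcases h with ⟨h1, h2⟩ | ⟨h1, h2⟩ <;> simp_all
      have hTeven : ∀ z, Even (edeg T z) := by
        intro z
        unfold edeg
        by_cases hzv : z = v
        · subst hzv; rw [hTv, Set.ncard_pair huw']; exact ⟨1, rfl⟩
        by_cases hzu : z = u
        · subst hzu; rw [hTu, Set.ncard_pair hvw']; exact ⟨1, rfl⟩
        by_cases hzw : z = w
        · subst hzw; rw [hTw, Set.ncard_pair hvu']; exact ⟨1, rfl⟩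
        · rw [hTother z hzv hzu hzw]; simp
      set J' := J ∆ T with hJ'def
      have hJ'le : J' ≤ G := symmDiff_le_sup.trans (sup_le hJle hTle)
      have hJ'par : ∀ z, Even (edeg J' z) ↔ Even (edeg J z) := by
        intro z
        rw [hJ'def, edeg_symmDiff_parity]
        have := hTeven z
        tauto
      -- the new isolated set is strictly smaller
      have hsub : {z | edeg J' z = 0} ⊆ {z | edeg J z = 0} \ {v} := by
        intro z hz
        have hz0 : J'.neighborSet z = ∅ := by
          have : edeg J' z = 0 := hz
          unfold edeg at this
          exact (Set.ncard_eq_zero (Set.toFinite _)).mp this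
        have hns := neighborSet_symmDiff J T z
        rw [← hJ'def] at hns
        by_cases hzv : z = v
        · exfalso
          subst hzv
          have : u ∈ J'.neighborSet z := by
            rw [hns, hvset]
            simp [hTv]
          rw [hz0] at this
          exact this
        by_cases hzu : z = u
        · exfalso
          subst hzu
          have hvnJ : v ∉ J.neighborSet z := by
            intro h
            have : z ∈ J.neighborSet v := ((J.adj_comm z v).mp h : J.Adj v z)
            rw [hvset] at this
            exact this
          have : v ∈ J'.neighborSet z := by
            rw [hns]
            right
            exact ⟨by rw [hTu]; exact Or.inl rfl, hvnJ⟩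
          rw [hz0] at this
          exact this
        by_cases hzw : z = w
        · exfalso
          subst hzw
          have hvnJ : v ∉ J.neighborSet z := by
            intro h
            have : z ∈ J.neighborSet v := ((J.adj_comm z v).mp h : J.Adj v z)
            rw [hvset] at this
            exact this
          have : v ∈ J'.neighborSet z := by
            rw [hns]
            right
            exact ⟨by rw [hTw]; exact Or.inl rfl, hvnJ⟩
          rw [hz0] at this
          exact this
        · constructor
          · show edeg J z = 0
            unfold edeg
            have : J.neighborSet z = ∅ := by
              have h0 := hz0
              rw [hns, hTother z hzv hzu hzw] at h0
              simpa using h0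
            rw [this]; simp
          · simpa using hzv
      have hlt : {z | edeg J' z = 0}.ncard < n := by
        calc {z | edeg J' z = 0}.ncard
            ≤ ({z | edeg J z = 0} \ {v}).ncard :=
              Set.ncard_le_ncard hsub (Set.toFinite _)
          _ < {z | edeg J z = 0}.ncard :=
              Set.ncard_diff_singleton_lt_of_mem hv (Set.toFinite _)
          _ = n := hcard
      obtain ⟨H, hHle, hHdeg, hHpar⟩ := ih _ hlt J' hJ'le rfl
      refine ⟨H, hHle, hHdeg, ?_⟩
      intro z
      rw [hHpar z, hJ'par z]

end Aux

theorem every_vertex_on_triangle_strong_parity {V : Type*} [Fintype V]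
    (G : SimpleGraph V) (hG : G.Connected)
    (htri : ∀ v : V, ∃ u w : V, G.Adj v u ∧ G.Adj v w ∧ G.Adj u w) :
    StrongParity G := by
  intro X hX
  obtain ⟨J, hJle, hJpar⟩ := exists_parity_sub hG X.ncard X hX rfl
  obtain ⟨H, hHle, hHdeg, hHpar⟩ := fix_isolated htri _ J hJle rfl
  refine ⟨H, ⟨hHle, hHdeg⟩, ?_⟩
  intro v
  rw [← hJpar v, ← Nat.not_even_iff_odd, ← Nat.not_even_iff_odd, hHpar v]
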